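/- arXiv:1511.03801 — 5 statements merged into one kernel-verified Lean document; each statement's English description precedes it below -/
import Mathlib

section
/- Let $1<p<2\alpha+1$, $a,b,S>0$, $\gamma=2\alpha+1-p$, and $f(y)=y^{(p-1)/2}-bSy^{\alpha}-aS$. If $ab^{(p-1)/\gamma}<\gamma\left[\frac{(p-1)^{p-1}}{(2\alpha S)^{2\alpha}}\right]^{1/\gamma}$, then the equation $f(y)=0$ has exactly two solutions in $(0,\infty)$. -/
open Real Set

theorem stmt3 (p α a b S γ : ℝ) (hp1 : 1 < p) (hp2 : p < 2 * α + 1)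
    (hα : 0 < α) (ha : 0 < a) (hb : 0 < b) (hS : 0 < S)
    (hγ : γ = 2 * α + 1 - p)
    (f : ℝ → ℝ) (hf : ∀ y, f y = y ^ ((p - 1) / 2) - b * S * y ^ α - a * S)
    (hcond : a * b ^ ((p - 1) / γ) < γ * ((p - 1) ^ (p - 1) / (2 * α * S) ^ (2 * α)) ^ (1 / γ)) :
    ∃ y₁ y₂ : ℝ, 0 < y₁ ∧ y₁ < y₂ ∧ f y₁ = 0 ∧ f y₂ = 0 ∧
      ∀ y, 0 < y → f y = 0 → y = y₁ ∨ y = y₂ := by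
  have hγpos : 0 < γ := by rw [hγ]; linarith
  have hp1' : (0:ℝ) < p - 1 := by linarith
  set q : ℝ := (p - 1) / 2 with hq
  have hqpos : 0 < q := by rw [hq]; linarith
  have hrq : α - q = γ / 2 := by rw [hγ, hq]; ring
  have hrpos : 0 < α - q := by rw [hrq]; linarith
  set s : ℝ := (p - 1) / γ with hs
  have hspos : 0 < s := div_pos hp1' hγpos
  set T : ℝ := 2 * α * S with hT
  have hTpos : 0 < T := by positivity
  set c0 : ℝ := q / (b * S * α) with hc0
  have hc0pos : 0 < c0 := by positivity
  set y₀ : ℝ := c0 ^ (α - q)⁻¹ with hy0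
  have hy0pos : 0 < y₀ := rpow_pos_of_pos hc0pos _
  have hy0r : y₀ ^ (α - q) = c0 := by
    rw [hy0, ← rpow_mul hc0pos.le, inv_mul_cancel₀ (ne_of_gt hrpos), rpow_one]
  have hy0q : y₀ ^ q = c0 ^ s := by
    rw [hy0, ← rpow_mul hc0pos.le]
    congr 1
    rw [hrq, hq, hs]
    field_simp
  -- replace f by the explicit function
  have hfeq : f = fun y => y ^ q - b * S * y ^ α - a * S := funext hf
  subst hfeq
  -- value at y₀
  have hbSc0 : b * S * c0 = q / α := by
    rw [hc0]; field_simp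
  have hy0α : y₀ ^ α = y₀ ^ q * c0 := by
    have h : α = q + (α - q) := by ring
    rw [h, rpow_add hy0pos, hy0r]
  have hfy0 : (fun y => y ^ q - b * S * y ^ α - a * S) y₀
      = γ / (2 * α) * c0 ^ s - a * S := by
    simp only
    rw [hy0α, ← hy0q]
    have h1 : (1 : ℝ) - q / α = γ / (2 * α) := by
      rw [hq, hγ, eq_div_iff (by positivity : (2:ℝ) * α ≠ 0), sub_mul,
        div_div, div_mul_eq_mul_div, mul_div_assoc,
        div_self (by positivity : (2:ℝ) * α ≠ 0)]
      ring
    have : y₀ ^ q - b * S * (y₀ ^ q * c0) = (1 - b * S * c0) * y₀ ^ q := by ring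
    rw [this, hbSc0, h1]
  -- transform the condition
  have hcond' : a * S < γ / (2 * α) * c0 ^ s := by
    have hγne : (2 * α + 1 - p) ≠ 0 := by linarith
    have e2 : (2 : ℝ) * α * (1 / γ) = 1 + s := by
      rw [hs, hγ]; field_simp; ring
    have e3 : (p - 1) * (1 / γ) = s := by rw [hs]; ring
    have e1 : ((p - 1) ^ (p - 1) / T ^ (2 * α)) ^ (1 / γ)
        = (p - 1) ^ s / (T * T ^ s) := by
      rw [div_rpow (by positivity) (by positivity), ← rpow_mul hp1'.le,
        ← rpow_mul hTpos.le, e3, e2, rpow_add hTpos, rpow_one]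
    rw [e1] at hcond
    have key : a * b ^ s * (T * T ^ s) < γ * (p - 1) ^ s := by
      have h := (mul_lt_mul_of_pos_right hcond (by positivity :
        (0:ℝ) < T * T ^ s))
      calc a * b ^ s * (T * T ^ s)
          < γ * ((p - 1) ^ s / (T * T ^ s)) * (T * T ^ s) := h
        _ = γ * (p - 1) ^ s := by
            rw [mul_assoc, div_mul_cancel₀ _ (ne_of_gt (by positivity : (0:ℝ) < T * T ^ s))]
    have hc0T : c0 = (p - 1) / (b * T) := by
      rw [hc0, hq, hT, div_div]
      congr 1
      ring
    have hc0s : c0 ^ s = (p - 1) ^ s / (b ^ s * T ^ s) := by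
      rw [hc0T, div_rpow hp1'.le (by positivity), mul_rpow hb.le hTpos.le]
    rw [hc0s]
    have hBT : (0:ℝ) < b ^ s * T ^ s := by positivity
    rw [show γ / (2 * α) * ((p - 1) ^ s / (b ^ s * T ^ s))
        = γ * (p - 1) ^ s / (2 * α * (b ^ s * T ^ s)) by ring,
      lt_div_iff₀ (by positivity)]
    have hTS : a * S * (2 * α * (b ^ s * T ^ s)) = a * b ^ s * (T * T ^ s) := by
      rw [hT]; ring
    rw [hTS]; exact key
  have hfy0pos : 0 < (fun y => y ^ q - b * S * y ^ α - a * S) y₀ := by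
    rw [hfy0]; linarith
  -- continuity
  have hcont : ∀ D : Set ℝ, (∀ x ∈ D, x ≠ 0) →
      ContinuousOn (fun y : ℝ => y ^ q - b * S * y ^ α - a * S) D := by
    intro D hD
    apply ContinuousOn.sub
    apply ContinuousOn.sub
    · exact fun x hx =>
        (Real.continuousAt_rpow_const x q (Or.inl (hD x hx))).continuousWithinAt
    · exact continuousOn_const.mul fun x hx =>
        (Real.continuousAt_rpow_const x α (Or.inl (hD x hx))).continuousWithinAt
    · exact continuousOn_const
  -- derivative
  have hderiv : ∀ x : ℝ, x ≠ 0 →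
      HasDerivAt (fun y : ℝ => y ^ q - b * S * y ^ α - a * S)
        (q * x ^ (q - 1) - b * S * (α * x ^ (α - 1))) x := by
    intro x hx
    exact (((Real.hasDerivAt_rpow_const (Or.inl hx)).sub
      ((Real.hasDerivAt_rpow_const (Or.inl hx)).const_mul (b * S))).sub_const _)
  have hfactor : ∀ x : ℝ, 0 < x →
      q * x ^ (q - 1) - b * S * (α * x ^ (α - 1))
        = x ^ (q - 1) * (q - b * S * α * x ^ (α - q)) := by
    intro x hx
    have : x ^ (α - 1) = x ^ (q - 1) * x ^ (α - q) := by
      rw [← rpow_add hx]; congr 1; ring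
    rw [this]; ring
  have hqc0 : b * S * α * c0 = q := by
    rw [hc0]; field_simp
  -- strict monotonicity on (0, y₀]
  have hmono : StrictMonoOn (fun y : ℝ => y ^ q - b * S * y ^ α - a * S) (Ioc 0 y₀) := by
    apply strictMonoOn_of_deriv_pos (convex_Ioc 0 y₀)
      (hcont _ fun x hx => ne_of_gt hx.1)
    intro x hx
    rw [interior_Ioc] at hx
    rw [(hderiv x (ne_of_gt hx.1)).deriv, hfactor x hx.1]
    apply mul_pos (rpow_pos_of_pos hx.1 _)
    have hlt : x ^ (α - q) < c0 := by
      rw [← hy0r]; exact rpow_lt_rpow hx.1.le hx.2 hrpos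
    have h2 := mul_lt_mul_of_pos_left hlt
      (by positivity : (0:ℝ) < b * S * α)
    rw [hqc0] at h2
    linarith
  -- strict antitonicity on [y₀, ∞)
  have hanti : StrictAntiOn (fun y : ℝ => y ^ q - b * S * y ^ α - a * S) (Ici y₀) := by
    apply strictAntiOn_of_deriv_neg (convex_Ici y₀)
      (hcont _ fun x hx => ne_of_gt (lt_of_lt_of_le hy0pos hx))
    intro x hx
    rw [interior_Ici] at hx
    have hxpos : 0 < x := lt_trans hy0pos hx
    rw [(hderiv x (ne_of_gt hxpos)).deriv, hfactor x hxpos]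
    apply mul_neg_of_pos_of_neg (rpow_pos_of_pos hxpos _)
    have hlt : c0 < x ^ (α - q) := by
      rw [← hy0r]; exact rpow_lt_rpow hy0pos.le hx hrpos
    have h2 := mul_lt_mul_of_pos_left hlt
      (by positivity : (0:ℝ) < b * S * α)
    rw [hqc0] at h2
    linarith
  -- a small point with negative value
  set ε : ℝ := min y₀ ((a * S) ^ q⁻¹) / 2 with hε
  have haSpos : (0:ℝ) < (a * S) ^ q⁻¹ := rpow_pos_of_pos (by positivity) _
  have hεpos : 0 < ε := by
    rw [hε]; have := lt_min hy0pos haSpos; linarith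
  have hεy0 : ε < y₀ := by
    rw [hε]
    have h1 : min y₀ ((a * S) ^ q⁻¹) ≤ y₀ := min_le_left _ _
    linarith
  have hfε : (fun y : ℝ => y ^ q - b * S * y ^ α - a * S) ε < 0 := by
    simp only
    have h1 : ε < (a * S) ^ q⁻¹ := by
      rw [hε]
      have := min_le_right y₀ ((a * S) ^ q⁻¹)
      linarith
    have h2 : ε ^ q < a * S := by
      have := rpow_lt_rpow hεpos.le h1 hqpos
      rwa [← rpow_mul (by positivity : (0:ℝ) ≤ a * S),
        inv_mul_cancel₀ (ne_of_gt hqpos), rpow_one] at this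
    have h3 : 0 < b * S * ε ^ α := by positivity
    linarith
  -- a large point with negative value
  set Y : ℝ := max y₀ ((1 / (b * S)) ^ (α - q)⁻¹) + 1 with hY
  have hMpos : (0:ℝ) < (1 / (b * S)) ^ (α - q)⁻¹ := rpow_pos_of_pos (by positivity) _
  have hy0Y : y₀ < Y := by
    rw [hY]; have := le_max_left y₀ ((1 / (b * S)) ^ (α - q)⁻¹); linarith
  have hYpos : 0 < Y := lt_trans hy0pos hy0Y
  have hfY : (fun y : ℝ => y ^ q - b * S * y ^ α - a * S) Y < 0 := by
    simp only
    have h1 : (1 / (b * S)) ^ (α - q)⁻¹ < Y := by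
      rw [hY]; have := le_max_right y₀ ((1 / (b * S)) ^ (α - q)⁻¹); linarith
    have h2 : 1 / (b * S) < Y ^ (α - q) := by
      have := rpow_lt_rpow hMpos.le h1 hrpos
      rwa [← rpow_mul (by positivity : (0:ℝ) ≤ 1 / (b * S)),
        inv_mul_cancel₀ (ne_of_gt hrpos), rpow_one] at this
    have h3 : Y ^ q < b * S * Y ^ α := by
      have hYα : Y ^ α = Y ^ q * Y ^ (α - q) := by
        rw [← rpow_add hYpos]; congr 1; ring
      have h4 : 1 < b * S * Y ^ (α - q) := by
        rw [mul_comm]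
        exact (div_lt_iff₀ (by positivity : (0:ℝ) < b * S)).mp h2
      calc Y ^ q = Y ^ q * 1 := by ring
        _ < Y ^ q * (b * S * Y ^ (α - q)) :=
            mul_lt_mul_of_pos_left h4 (rpow_pos_of_pos hYpos q)
        _ = b * S * Y ^ α := by rw [hYα]; ring
    have h5 : 0 < a * S := by positivity
    linarith
  -- intermediate value theorem on both sides
  obtain ⟨y₁, hy₁mem, hfy₁⟩ := intermediate_value_Ioo hεy0.le
    (hcont _ fun x hx => ne_of_gt (lt_of_lt_of_le hεpos hx.1))
    (⟨hfε, hfy0pos⟩ : (0:ℝ) ∈ Ioo _ _)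
  obtain ⟨y₂, hy₂mem, hfy₂⟩ := intermediate_value_Ioo' hy0Y.le
    (hcont _ fun x hx => ne_of_gt (lt_of_lt_of_le hy0pos hx.1))
    (⟨hfY, hfy0pos⟩ : (0:ℝ) ∈ Ioo _ _)
  have hy₁pos : 0 < y₁ := lt_trans hεpos hy₁mem.1
  have hy₁lt : y₁ < y₀ := hy₁mem.2
  have hy₂gt : y₀ < y₂ := hy₂mem.1
  refine ⟨y₁, y₂, hy₁pos, lt_trans hy₁lt hy₂gt, hfy₁, hfy₂, ?_⟩
  intro y hy hfy
  rcases lt_trichotomy y y₀ with hlt | heq | hgt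
  · left
    exact hmono.injOn ⟨hy, hlt.le⟩ ⟨hy₁pos, hy₁lt.le⟩ (hfy.trans hfy₁.symm)
  · exfalso; rw [heq] at hfy; rw [hfy] at hfy0pos; exact lt_irrefl 0 hfy0pos
  · right
    exact hanti.injOn hgt.le hy₂gt.le (hfy.trans hfy₂.symm)
end

section
/- Let $1<p<2\alpha+1$, $a,b,S>0$, $\gamma=2\alpha+1-p$, and $f(y)=y^{(p-1)/2}-bSy^{\alpha}-aS$. If $ab^{(p-1)/\gamma}>\gamma\left[\frac{(p-1)^{p-1}}{(2\alpha S)^{2\alpha}}\right]^{1/\gamma}$, then $f(y)<0$ for all $y>0$; in particular $f(y)=0$ has no solution in $(0,\infty)$. -/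
open Real Set

theorem stmt4 (p α a b S γ : ℝ) (hp1 : 1 < p) (hp2 : p < 2 * α + 1)
    (hα : 0 < α) (ha : 0 < a) (hb : 0 < b) (hS : 0 < S)
    (hγ : γ = 2 * α + 1 - p)
    (f : ℝ → ℝ) (hf : ∀ y, f y = y ^ ((p - 1) / 2) - b * S * y ^ α - a * S)
    (hcond : a * b ^ ((p - 1) / γ) > γ * ((p - 1) ^ (p - 1) / (2 * α * S) ^ (2 * α)) ^ (1 / γ)) :
    ∀ y, 0 < y → f y < 0 := by
  intro y hy
  have hγpos : 0 < γ := by rw [hγ]; linarith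
  have hγne : γ ≠ 0 := ne_of_gt hγpos
  have hc : 0 < p - 1 := by linarith
  have hA : (0:ℝ) < 2 * α := by linarith
  have hAS : 0 < 2 * α * S := by positivity
  set e : ℝ := (p - 1) / γ with he
  have hepos : 0 < e := div_pos hc hγpos
  -- rewrite the right side of hcond
  have hSplit : ((p - 1) ^ (p - 1) / (2 * α * S) ^ (2 * α)) ^ (1 / γ)
      = (p - 1) ^ e / (2 * α * S * (2 * α * S) ^ e) := by
    rw [Real.div_rpow (by positivity) (by positivity),
      ← Real.rpow_mul (le_of_lt hc), ← Real.rpow_mul (le_of_lt hAS)]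
    have h1 : (p - 1) * (1 / γ) = e := by rw [he]; ring
    have h2 : 2 * α * (1 / γ) = 1 + e := by
      rw [he]; field_simp; linarith
    rw [h1, h2, Real.rpow_add hAS, Real.rpow_one]
  rw [hSplit] at hcond
  have hKey : γ * (p - 1) ^ e < 2 * α * S * (2 * α * S) ^ e * (a * b ^ e) := by
    rw [gt_iff_lt, ← mul_div_assoc, div_lt_iff₀ (by positivity)] at hcond
    nlinarith [hcond]
  -- set up Young's inequality
  set r : ℝ := 2 * α / (p - 1) with hr
  set s : ℝ := 2 * α / γ with hs
  have hrpos : 0 < r := by positivity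
  have hspos : 0 < s := by positivity
  have hconj : r.HolderConjugate s := by
    rw [Real.holderConjugate_iff]; constructor
    · rw [hr, lt_div_iff₀ hc]; linarith
    · rw [hr, hs]; field_simp; linarith
  set K : ℝ := r * b * S with hK
  have hKpos : 0 < K := by positivity
  set L : ℝ := K ^ r⁻¹ with hL
  have hLpos : 0 < L := Real.rpow_pos_of_pos hKpos _
  have young := Real.young_inequality_of_nonneg
    (a := L * y ^ ((p - 1) / 2)) (b := L⁻¹)
    (by positivity) (by positivity) hconj
  have hLHS : (L * y ^ ((p - 1) / 2)) * L⁻¹ = y ^ ((p - 1) / 2) := by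
    rw [mul_comm L _, mul_assoc, mul_inv_cancel₀ (ne_of_gt hLpos), mul_one]
  have hT1 : (L * y ^ ((p - 1) / 2)) ^ r / r = b * S * y ^ α := by
    rw [Real.mul_rpow (le_of_lt hLpos) (by positivity), hL,
      ← Real.rpow_mul (le_of_lt hKpos), inv_mul_cancel₀ (ne_of_gt hrpos),
      Real.rpow_one, ← Real.rpow_mul (le_of_lt hy)]
    have hx : (p - 1) / 2 * r = α := by rw [hr]; field_simp
    rw [hx, hK]
    field_simp
  have hT2 : (L⁻¹) ^ s / s = (K ^ e)⁻¹ * γ / (2 * α) := by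
    rw [Real.inv_rpow (le_of_lt hLpos), hL, ← Real.rpow_mul (le_of_lt hKpos)]
    have hx : r⁻¹ * s = e := by rw [hr, hs, he]; field_simp
    rw [hx, hs]
    field_simp
  rw [hLHS, hT1, hT2] at young
  -- the bound on the constant
  have hKe : K ^ e = (2 * α * S) ^ e * b ^ e / (p - 1) ^ e := by
    have hx : K = 2 * α * S * b / (p - 1) := by rw [hK, hr]; field_simp
    rw [hx, Real.div_rpow (by positivity) (le_of_lt hc),
      Real.mul_rpow (le_of_lt hAS) (le_of_lt hb)]
  have hM : (K ^ e)⁻¹ * γ / (2 * α) < a * S := by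
    have hKepos : 0 < K ^ e := Real.rpow_pos_of_pos hKpos _
    have hpe : 0 < (p - 1) ^ e := Real.rpow_pos_of_pos hc e
    rw [div_lt_iff₀ hA, inv_mul_lt_iff₀ hKepos, hKe, div_mul_eq_mul_div,
      lt_div_iff₀ hpe]
    nlinarith [hKey]
  rw [hf]
  nlinarith [young, hM]
end

section
/- Let $1<p<2\alpha+1$, $a,S>0$, $\gamma=2\alpha+1-p$. For each $b>0$ with $ab^{(p-1)/\gamma}<\gamma\left[\frac{(p-1)^{p-1}}{(2\alpha S)^{2\alpha}}\right]^{1/\gamma}$, let $0<y_1(b)<y_2(b)$ be the two solutions of $y^{(p-1)/2}-bSy^{\alpha}-aS=0$. Then $y_1(b)\to (aS)^{2/(p-1)}$ and $y_2(b)\to+\infty$ as $b\to 0^+$. -/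
open Real Set Filter

lemma exp_combo_lt (c x y u v : ℝ) (hxy : x ≠ y) (hc : c ≠ 0)
    (hu : 0 < u) (hv : 0 < v) (huv : u + v = 1) :
    Real.exp (c * (u * x + v * y)) < u * Real.exp (c * x) + v * Real.exp (c * y) := by
  have h := strictConvexOn_exp.2 (Set.mem_univ (c * x)) (Set.mem_univ (c * y))
      (fun h => hxy (mul_left_cancel₀ hc h)) hu hv huv
  have harg : c * (u * x + v * y) = u • (c * x) + v • (c * y) := by
    simp only [smul_eq_mul]; ring
  rw [harg]
  simpa [smul_eq_mul] using h

lemma middle (A B β δ x y z : ℝ) (hA : 0 < A) (hB : 0 < B) (hβ : 0 < β) (hδ : 0 < δ)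
    (hxy : x < y) (hyz : y < z)
    (hx : A * Real.exp (β * x) + B * Real.exp ((-δ) * x) ≤ 1)
    (hz : A * Real.exp (β * z) + B * Real.exp ((-δ) * z) ≤ 1) :
    A * Real.exp (β * y) + B * Real.exp ((-δ) * y) < 1 := by
  have hzx : 0 < z - x := by linarith
  set u := (z - y) / (z - x) with hu_def
  set v := (y - x) / (z - x) with hv_def
  have hu : 0 < u := div_pos (by linarith) hzx
  have hv : 0 < v := div_pos (by linarith) hzx
  have huv : u + v = 1 := by
    rw [hu_def, hv_def]; field_simp; ring
  have hy : y = u * x + v * z := by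
    rw [hu_def, hv_def]; field_simp; ring
  have e1 : Real.exp (β * y) < u * Real.exp (β * x) + v * Real.exp (β * z) := by
    rw [hy]; exact exp_combo_lt β x z u v (by linarith) (ne_of_gt hβ) hu hv huv
  have e2 : Real.exp ((-δ) * y) < u * Real.exp ((-δ) * x) + v * Real.exp ((-δ) * z) := by
    rw [hy]; exact exp_combo_lt (-δ) x z u v (by linarith) (by simp [ne_of_gt hδ]) hu hv huv
  nlinarith [mul_lt_mul_of_pos_left e1 hA, mul_lt_mul_of_pos_left e2 hB]

lemma sandwich (A B β δ t₁ t₂ s : ℝ) (hA : 0 < A) (hB : 0 < B) (hβ : 0 < β) (hδ : 0 < δ)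
    (h1 : A * Real.exp (β * t₁) + B * Real.exp ((-δ) * t₁) = 1)
    (h2 : A * Real.exp (β * t₂) + B * Real.exp ((-δ) * t₂) = 1)
    (h12 : t₁ < t₂)
    (hs : A * Real.exp (β * s) + B * Real.exp ((-δ) * s) < 1) :
    t₁ < s ∧ s < t₂ := by
  constructor
  · by_contra h
    push_neg at h
    rcases eq_or_lt_of_le h with he | hlt
    · rw [he] at hs; linarith
    · have := middle A B β δ s t₁ t₂ hA hB hβ hδ hlt h12 hs.le h2.le
      linarith
  · by_contra h
    push_neg at h
    rcases eq_or_lt_of_le h with he | hlt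
    · rw [← he] at hs; linarith
    · have := middle A B β δ t₁ t₂ s hA hB hβ hδ h12 hlt h1.le hs.le
      linarith

lemma form_id (A B α δ β y : ℝ) (hy : 0 < y) (hβδ : β + δ = α) :
    y ^ δ - A * y ^ α - B =
      Real.exp (δ * Real.log y) *
        (1 - A * Real.exp (β * Real.log y) - B * Real.exp ((-δ) * Real.log y)) := by
  set L := Real.log y with hL
  rw [Real.rpow_def_of_pos hy δ, Real.rpow_def_of_pos hy α]
  have e1 : Real.exp (δ * L) * Real.exp (β * L) = Real.exp (L * α) := by
    rw [← Real.exp_add]; congr 1; rw [← hβδ]; ring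
  have e2 : Real.exp (δ * L) * Real.exp ((-δ) * L) = 1 := by
    rw [← Real.exp_add]
    have : δ * L + (-δ) * L = 0 := by ring
    rw [this, Real.exp_zero]
  have e3 : Real.exp (L * δ) = Real.exp (δ * L) := by rw [mul_comm]
  linear_combination e3 + A * e1 + B * e2

theorem stmt8 (p α a S γ : ℝ) (hp1 : 1 < p) (hp2 : p < 2 * α + 1)
    (hα : 0 < α) (ha : 0 < a) (hS : 0 < S)
    (hγ : γ = 2 * α + 1 - p)
    (y₁ y₂ : ℝ → ℝ)
    (hsol : ∀ b : ℝ, 0 < b →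
      a * b ^ ((p - 1) / γ) < γ * ((p - 1) ^ (p - 1) / (2 * α * S) ^ (2 * α)) ^ (1 / γ) →
      0 < y₁ b ∧ y₁ b < y₂ b ∧
      (y₁ b) ^ ((p - 1) / 2) - b * S * (y₁ b) ^ α - a * S = 0 ∧
      (y₂ b) ^ ((p - 1) / 2) - b * S * (y₂ b) ^ α - a * S = 0) :
    Tendsto y₁ (nhdsWithin 0 (Set.Ioi 0)) (nhds ((a * S) ^ (2 / (p - 1)))) ∧
    Tendsto y₂ (nhdsWithin 0 (Set.Ioi 0)) atTop := by
  have hp1' : 0 < p - 1 := by linarith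
  have hγpos : 0 < γ := by rw [hγ]; linarith
  set δ' : ℝ := (p - 1) / 2 with hδ'def
  have hδ'pos : 0 < δ' := div_pos hp1' two_pos
  set β : ℝ := α - δ' with hβdef
  have hβpos : 0 < β := by rw [hβdef, hδ'def]; linarith
  have hβδ : β + δ' = α := by rw [hβdef]; ring
  set L : ℝ := (a * S) ^ (2 / (p - 1)) with hLdef
  have haS : 0 < a * S := mul_pos ha hS
  have hL : 0 < L := Real.rpow_pos_of_pos haS _
  have hLδ : L ^ δ' = a * S := by
    rw [hLdef, ← Real.rpow_mul haS.le]
    rw [show 2 / (p - 1) * δ' = 1 by rw [hδ'def]; field_simp]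
    exact Real.rpow_one _
  set R : ℝ := γ * ((p - 1) ^ (p - 1) / (2 * α * S) ^ (2 * α)) ^ (1 / γ) with hRdef
  have hR : 0 < R := by
    apply mul_pos hγpos
    apply Real.rpow_pos_of_pos
    exact div_pos (Real.rpow_pos_of_pos hp1' _)
      (Real.rpow_pos_of_pos (by positivity) _)
  -- the smallness hypothesis on b holds eventually
  have pre : ∀ᶠ b in nhdsWithin (0 : ℝ) (Set.Ioi 0), a * b ^ ((p - 1) / γ) < R := by
    have hRa : 0 < R / a := div_pos hR ha
    have hb₀ : 0 < (R / a) ^ (γ / (p - 1)) := Real.rpow_pos_of_pos hRa _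
    filter_upwards [Ioo_mem_nhdsGT_of_mem
      (show (0 : ℝ) ∈ Set.Ico 0 ((R / a) ^ (γ / (p - 1))) from ⟨le_refl _, hb₀⟩)] with b hb
    obtain ⟨hb1, hb2⟩ := hb
    have he : 0 < (p - 1) / γ := div_pos hp1' hγpos
    have hlt : b ^ ((p - 1) / γ) < ((R / a) ^ (γ / (p - 1))) ^ ((p - 1) / γ) :=
      Real.rpow_lt_rpow hb1.le hb2 he
    have h2 : ((R / a) ^ (γ / (p - 1))) ^ ((p - 1) / γ) = R / a := by
      rw [← Real.rpow_mul hRa.le]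
      rw [show γ / (p - 1) * ((p - 1) / γ) = 1 by field_simp]
      exact Real.rpow_one _
    rw [h2] at hlt
    have := (mul_lt_mul_iff_right₀ ha).2 hlt
    calc a * b ^ ((p - 1) / γ) < a * (R / a) := this
      _ = R := by field_simp
  -- lower bound for y₁
  have low : ∀ᶠ b in nhdsWithin (0 : ℝ) (Set.Ioi 0), L < y₁ b := by
    filter_upwards [pre, self_mem_nhdsWithin] with b hbpre hbpos
    obtain ⟨hy1pos, h12, heq1, heq2⟩ := hsol b hbpos hbpre

    have h1 : a * S < (y₁ b) ^ δ' := by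
      have hbSy : 0 < b * S * (y₁ b) ^ α :=
        mul_pos (mul_pos (Set.mem_Ioi.mp hbpos) hS) (Real.rpow_pos_of_pos hy1pos α)
      linarith
    have h2 : (a * S) ^ (1 / δ') < ((y₁ b) ^ δ') ^ (1 / δ') :=
      Real.rpow_lt_rpow haS.le h1 (by positivity)
    have h3 : ((y₁ b) ^ δ') ^ (1 / δ') = y₁ b := by
      rw [← Real.rpow_mul hy1pos.le]
      rw [show δ' * (1 / δ') = 1 by field_simp]
      exact Real.rpow_one _
    have h4 : (a * S) ^ (1 / δ') = L := by
      rw [hLdef]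
      congr 1
      rw [hδ'def]
      rw [one_div_div]
    rw [h3, h4] at h2
    exact h2
  -- the key: any point c > L eventually separates the two roots
  have key : ∀ c : ℝ, L < c →
      ∀ᶠ b in nhdsWithin (0 : ℝ) (Set.Ioi 0), y₁ b < c ∧ c < y₂ b := by
    intro c hc
    have hcpos : 0 < c := hL.trans hc
    have hcδ : a * S < c ^ δ' := by
      rw [← hLδ]
      exact Real.rpow_lt_rpow hL.le hc hδ'pos
    set b₁ : ℝ := (c ^ δ' - a * S) / (S * c ^ α) with hb₁def
    have hb₁ : 0 < b₁ := div_pos (by linarith) (by positivity)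
    filter_upwards [pre,
      Ioo_mem_nhdsGT_of_mem (show (0 : ℝ) ∈ Set.Ico 0 b₁ from ⟨le_refl _, hb₁⟩)]
      with b hbpre hbIoo
    obtain ⟨hbpos, hbb₁⟩ := hbIoo
    obtain ⟨hy1pos, h12, heq1, heq2⟩ := hsol b hbpos hbpre
    have hy2pos : 0 < y₂ b := hy1pos.trans h12

    -- f_b(c) > 0
    have hfc : 0 < c ^ δ' - b * S * c ^ α - a * S := by
      have h' : b * (S * c ^ α) < c ^ δ' - a * S := (lt_div_iff₀ (by positivity)).1 hbb₁
      rw [← mul_assoc] at h'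
      linarith
    -- convert everything to exponential form
    have hbS : 0 < b * S := mul_pos hbpos hS
    rw [form_id (b * S) (a * S) α δ' β (y₁ b) hy1pos hβδ] at heq1
    rw [form_id (b * S) (a * S) α δ' β (y₂ b) hy2pos hβδ] at heq2
    rw [form_id (b * S) (a * S) α δ' β c hcpos hβδ] at hfc
    have h1 : b * S * Real.exp (β * Real.log (y₁ b)) +
        a * S * Real.exp ((-δ') * Real.log (y₁ b)) = 1 := by
      rcases mul_eq_zero.1 heq1 with h | h
      · exact absurd h (Real.exp_ne_zero _)
      · linarith
    have h2 : b * S * Real.exp (β * Real.log (y₂ b)) +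
        a * S * Real.exp ((-δ') * Real.log (y₂ b)) = 1 := by
      rcases mul_eq_zero.1 heq2 with h | h
      · exact absurd h (Real.exp_ne_zero _)
      · linarith
    have hs : b * S * Real.exp (β * Real.log c) +
        a * S * Real.exp ((-δ') * Real.log c) < 1 := by
      by_contra hX
      push_neg at hX
      have hXle : 1 - b * S * Real.exp (β * Real.log c) -
          a * S * Real.exp ((-δ') * Real.log c) ≤ 0 := by linarith
      nlinarith [Real.exp_pos (δ' * Real.log c),
        mul_nonpos_of_nonneg_of_nonpos (Real.exp_pos (δ' * Real.log c)).le hXle]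
    have hlog12 : Real.log (y₁ b) < Real.log (y₂ b) := Real.log_lt_log hy1pos h12
    obtain ⟨hA, hB⟩ := sandwich (b * S) (a * S) β δ'
      (Real.log (y₁ b)) (Real.log (y₂ b)) (Real.log c)
      hbS haS hβpos hδ'pos h1 h2 hlog12 hs
    constructor
    · exact (Real.log_lt_log_iff hy1pos hcpos).1 hA
    · exact (Real.log_lt_log_iff hcpos hy2pos).1 hB
  constructor
  ·
    rw [tendsto_order]
    constructor
    · intro c hcL
      filter_upwards [low] with b hb
      exact hcL.trans hb
    · intro c hcL
      filter_upwards [key c hcL] with b hb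
      exact hb.1
  · rw [tendsto_atTop]
    intro M
    have hM : L < max M (L + 1) := lt_of_lt_of_le (by linarith) (le_max_right _ _)
    filter_upwards [key (max M (L + 1)) hM] with b hb
    exact le_of_lt (lt_of_le_of_lt (le_max_left _ _) hb.2)
end

section
/- Let $0<p<1$. Then there is no bounded nontrivial $C^2$ solution of $-\Delta u=u^p$, $u\geq 0$, on all of $\mathbb{R}^N$. That is, if $u\in C^2(\mathbb{R}^N)$ satisfies $u\geq 0$, $\sup_{\mathbb{R}^N}u<\infty$, and $-\Delta u=u^p$ in $\mathbb{R}^N$, then $u\equiv 0$. -/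
open Real

/-- The Laplacian of `u : ℝ^N → ℝ`, as the sum of second partial derivatives. -/
noncomputable def lap {N : ℕ} (u : EuclideanSpace ℝ (Fin N) → ℝ)
    (x : EuclideanSpace ℝ (Fin N)) : ℝ :=
  ∑ i : Fin N, fderiv ℝ (fun y => fderiv ℝ u y (EuclideanSpace.single i 1)) x
    (EuclideanSpace.single i 1)

set_option maxHeartbeats 1000000

open Filter Metric Set Topology

lemma deriv2_nonneg_1d {g G : ℝ → ℝ} {c : ℝ}
    (hg : ∀ t, HasDerivAt g (G t) t)
    (hG : HasDerivAt G c 0)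
    (hmin : IsLocalMin g 0) : 0 ≤ c := by
  by_contra hc
  push_neg at hc
  have hG0 : G 0 = 0 := by
    have h := hmin.deriv_eq_zero
    rwa [(hg 0).deriv] at h
  have hslope : Tendsto (slope G 0) (𝓝[≠] (0:ℝ)) (𝓝 c) :=
    hasDerivAt_iff_tendsto_slope.1 hG
  have hslope' : Tendsto (slope G 0) (𝓝[>] (0:ℝ)) (𝓝 c) :=
    hslope.mono_left (nhdsWithin_mono _ (fun t ht => ne_of_gt ht))
  have hev : ∀ᶠ t in 𝓝[>] (0:ℝ), slope G 0 t < 0 :=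
    hslope'.eventually_lt_const hc
  rw [eventually_nhdsWithin_iff] at hev
  rcases Metric.eventually_nhds_iff.1 hev with ⟨δ, hδ, hball⟩
  have hGneg : ∀ t ∈ Ioo (0:ℝ) δ, G t < 0 := by
    intro t ht
    have hs : slope G 0 t < 0 :=
      hball (by simpa [abs_of_pos ht.1] using ht.2) ht.1
    have he : slope G 0 t = G t / t := by simp [slope, hG0]; ring
    rw [he] at hs
    by_contra hGt
    push_neg at hGt
    exact absurd (div_nonneg hGt ht.1.le) (not_le.2 hs)
  have hanti : StrictAntiOn g (Icc 0 (δ/2)) := by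
    apply strictAntiOn_of_deriv_neg (convex_Icc _ _)
    · exact fun t _ => (hg t).continuousAt.continuousWithinAt
    · intro t ht
      rw [interior_Icc] at ht
      rw [(hg t).deriv]
      exact hGneg t ⟨ht.1, by linarith [ht.2]⟩
  rcases Metric.eventually_nhds_iff.1 hmin with ⟨η, hη, hmb⟩
  set t0 := min (δ/4) (η/2) with ht0def
  have ht0pos : 0 < t0 := lt_min (by linarith) (by linarith)
  have h1 : g t0 < g 0 := by
    apply hanti (by constructor <;> [rfl; linarith]) ⟨ht0pos.le, by
      have := min_le_left (δ/4) (η/2); linarith⟩ ht0pos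
  have h2 : g 0 ≤ g t0 := by
    apply hmb
    have := min_le_right (δ/4) (η/2)
    simp only [dist_zero_right, Real.norm_eq_abs, abs_of_pos ht0pos]
    linarith
  linarith
variable {N : ℕ}

lemma dir2_nonneg {f : EuclideanSpace ℝ (Fin N) → ℝ}
    {f' : EuclideanSpace ℝ (Fin N) → (EuclideanSpace ℝ (Fin N) →L[ℝ] ℝ)}
    {x v : EuclideanSpace ℝ (Fin N)} {b : EuclideanSpace ℝ (Fin N) →L[ℝ] ℝ}
    (hd : ∀ y, HasFDerivAt f (f' y) y)
    (h2 : HasFDerivAt (fun y => f' y v) b x)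
    (hmin : IsLocalMin f x) : 0 ≤ b v := by
  have hline : ∀ t : ℝ, HasDerivAt (fun s : ℝ => x + s • v) v t := by
    intro t
    have h1 : HasDerivAt (fun s : ℝ => s • v) ((1:ℝ) • v) t :=
      (hasDerivAt_id t).smul_const v
    have h2' := h1.const_add x
    simpa using h2'
  have hg : ∀ t, HasDerivAt (fun s : ℝ => f (x + s • v)) (f' (x + t • v) v) t := by
    intro t
    have := (hd (x + t • v)).comp_hasDerivAt t (hline t)
    simpa [Function.comp_def] using this
  have hG : HasDerivAt (fun t : ℝ => f' (x + t • v) v) (b v) 0 := by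
    have := h2.comp_hasDerivAt_of_eq 0 (hline 0) (by simp)
    simpa [Function.comp_def] using this
  have hmin' : IsLocalMin (fun s : ℝ => f (x + s • v)) 0 := by
    have hc : ContinuousAt (fun s : ℝ => x + s • v) 0 := by fun_prop
    have hgb : IsLocalMin f ((fun s : ℝ => x + s • v) 0) := by simpa using hmin
    have := IsLocalMin.comp_continuous (g := fun s : ℝ => x + s • v) (b := 0) hgb hc
    simpa [Function.comp_def] using this
  exact deriv2_nonneg_1d hg hG hmin'

lemma lap_eq {f : EuclideanSpace ℝ (Fin N) → ℝ}
    {f' : EuclideanSpace ℝ (Fin N) → (EuclideanSpace ℝ (Fin N) →L[ℝ] ℝ)}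
    {x : EuclideanSpace ℝ (Fin N)}
    {b : Fin N → (EuclideanSpace ℝ (Fin N) →L[ℝ] ℝ)}
    (hd : ∀ y, HasFDerivAt f (f' y) y)
    (h2 : ∀ i, HasFDerivAt (fun y => f' y (EuclideanSpace.single i 1)) (b i) x) :
    lap f x = ∑ i, b i (EuclideanSpace.single i 1) := by
  unfold lap
  refine Finset.sum_congr rfl fun i _ => ?_
  have he : (fun y => fderiv ℝ f y (EuclideanSpace.single i 1))
      = fun y => f' y (EuclideanSpace.single i 1) :=
    funext fun y => by rw [(hd y).fderiv]
  rw [he, (h2 i).fderiv]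

lemma lap_nonneg_of_min {f : EuclideanSpace ℝ (Fin N) → ℝ}
    {f' : EuclideanSpace ℝ (Fin N) → (EuclideanSpace ℝ (Fin N) →L[ℝ] ℝ)}
    {x : EuclideanSpace ℝ (Fin N)}
    {b : Fin N → (EuclideanSpace ℝ (Fin N) →L[ℝ] ℝ)}
    (hd : ∀ y, HasFDerivAt f (f' y) y)
    (h2 : ∀ i, HasFDerivAt (fun y => f' y (EuclideanSpace.single i 1)) (b i) x)
    (hmin : IsLocalMin f x) : 0 ≤ lap f x := by
  rw [lap_eq hd h2]
  exact Finset.sum_nonneg fun i _ => dir2_nonneg hd (h2 i) hmin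
variable {N : ℕ}

noncomputable section

def esq (a : EuclideanSpace ℝ (Fin N)) (x : EuclideanSpace ℝ (Fin N)) : ℝ :=
  ∑ i, (x i - a i) * (x i - a i)

def esq' (a y : EuclideanSpace ℝ (Fin N)) : EuclideanSpace ℝ (Fin N) →L[ℝ] ℝ :=
  ∑ i, (2 * (y i - a i)) • (EuclideanSpace.proj i : EuclideanSpace ℝ (Fin N) →L[ℝ] ℝ)

lemma hasFDerivAt_esq (a y : EuclideanSpace ℝ (Fin N)) :
    HasFDerivAt (esq a) (esq' a y) y := by
  apply HasFDerivAt.fun_sum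
  intro i _
  have hp : HasFDerivAt (fun x : EuclideanSpace ℝ (Fin N) => x i - a i)
      (EuclideanSpace.proj i : EuclideanSpace ℝ (Fin N) →L[ℝ] ℝ) y := by
    simpa using ((EuclideanSpace.proj (𝕜 := ℝ) (ι := Fin N) i).hasFDerivAt (x := y)).sub_const (a i)
  have h2 := hp.mul hp
  convert h2 using 1
  · rfl
  · rfl
  rw [two_mul, add_smul]

lemma esq'_apply (a y : EuclideanSpace ℝ (Fin N)) (j : Fin N) :
    esq' a y (EuclideanSpace.single j 1) = 2 * (y j - a j) := by
  unfold esq'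
  rw [ContinuousLinearMap.sum_apply]
  rw [Finset.sum_eq_single j]
  · simp [EuclideanSpace.single_apply]
  · intro i _ hij
    simp [EuclideanSpace.single_apply, hij]
  · simp

lemma esq_eq_dist (a x : EuclideanSpace ℝ (Fin N)) : esq a x = dist x a ^ 2 := by
  rw [EuclideanSpace.dist_eq, Real.sq_sqrt (by positivity)]
  unfold esq
  refine Finset.sum_congr rfl fun i _ => ?_
  rw [Real.dist_eq, sq_abs]
  ring

lemma esq_nonneg (a x : EuclideanSpace ℝ (Fin N)) : 0 ≤ esq a x := by
  rw [esq_eq_dist]; positivity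

lemma esq_line (a y : EuclideanSpace ℝ (Fin N)) (t : ℝ) :
    esq a (a + t • (y - a)) = t ^ 2 * esq a y := by
  unfold esq
  rw [Finset.mul_sum]
  refine Finset.sum_congr rfl fun i _ => ?_
  have h1 : (a + t • (y - a)) i = a i + t * (y i - a i) := by
    simp [PiLp.add_apply, PiLp.smul_apply, PiLp.sub_apply]
  rw [h1]; ring

end

section Main
variable {N : ℕ} {u : EuclideanSpace ℝ (Fin N) → ℝ}

lemma hddu (hreg : ContDiff ℝ 2 u) (i : Fin N) (x : EuclideanSpace ℝ (Fin N)) :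
    HasFDerivAt (fun y => fderiv ℝ u y (EuclideanSpace.single i 1))
      (fderiv ℝ (fun y => fderiv ℝ u y (EuclideanSpace.single i 1)) x) x := by
  apply DifferentiableAt.hasFDerivAt
  have hC1 : ContDiff ℝ 1 (fderiv ℝ u) := hreg.fderiv_right (by norm_num)
  exact (hC1.differentiable one_ne_zero x).clm_apply (differentiableAt_const _)

lemma caseA (hNpos : 0 < N) {p : ℝ} (hp0 : 0 < p) (hp1 : p < 1)
    (hreg : ContDiff ℝ 2 u)
    (heq : ∀ x, -(lap u x) = (u x) ^ p)
    (hupos : ∀ x, 0 < u x) : False := by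
  have hdu : ∀ y, HasFDerivAt u (fderiv ℝ u y) y := fun y =>
    ((hreg.differentiable (by norm_num)) y).hasFDerivAt
  have hNR : (0:ℝ) < N := by exact_mod_cast hNpos
  set c : ℝ := (1 - p) / (4 * N) with hc
  have hcpos : 0 < c := by
    apply div_pos (by linarith) (by positivity)
  set w : EuclideanSpace ℝ (Fin N) → ℝ := fun x => (u x) ^ (1 - p) + c * esq 0 x with hw
  set w' : EuclideanSpace ℝ (Fin N) → (EuclideanSpace ℝ (Fin N) →L[ℝ] ℝ) := fun y =>
    (((1 - p) * (u y) ^ (1 - p - 1)) • fderiv ℝ u y) + c • esq' 0 y with hwd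
  have hw' : ∀ y, HasFDerivAt w (w' y) y := fun y =>
    ((hdu y).rpow_const (Or.inl (hupos y).ne')).add ((hasFDerivAt_esq 0 y).const_mul c)
  have hwc : Continuous w := by
    apply Continuous.add
    · exact hreg.continuous.rpow_const (fun x => Or.inl (hupos x).ne')
    · exact continuous_const.mul (continuous_finset_sum _ fun i _ =>
        (((EuclideanSpace.proj i).continuous.sub continuous_const).mul
          (((EuclideanSpace.proj i).continuous.sub continuous_const))))
  have hwlb : ∀ x, c * dist x 0 ^ 2 ≤ w x := by
    intro x
    have h1 : (0:ℝ) ≤ (u x) ^ (1 - p) := Real.rpow_nonneg (hupos x).le _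
    have h2 : esq 0 x = dist x 0 ^ 2 := esq_eq_dist 0 x
    show c * dist x 0 ^ 2 ≤ (u x) ^ (1 - p) + c * esq 0 x
    rw [h2]; linarith
  have hw0 : 0 ≤ w 0 := by
    have := hwlb 0
    have h0 : dist (0 : EuclideanSpace ℝ (Fin N)) 0 = 0 := dist_self 0
    rw [h0] at this
    nlinarith
  set R : ℝ := Real.sqrt ((w 0 + 1) / c) with hR
  have hRsq : c * R ^ 2 = w 0 + 1 := by
    rw [hR, Real.sq_sqrt (by positivity)]
    field_simp
  obtain ⟨x₀, hx₀K, hx₀min⟩ := (isCompact_closedBall (0 : EuclideanSpace ℝ (Fin N)) R).exists_isMinOn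
      ⟨0, mem_closedBall_self (Real.sqrt_nonneg _)⟩ hwc.continuousOn
  have hx₀min' := isMinOn_iff.1 hx₀min
  have hwx₀ : w x₀ ≤ w 0 := hx₀min' 0 (mem_closedBall_self (Real.sqrt_nonneg _))
  have hx₀lt : dist x₀ 0 < R := by
    rcases lt_or_eq_of_le (mem_closedBall.1 hx₀K) with h | h
    · exact h
    · exfalso
      have h3 := hwlb x₀
      rw [h] at h3
      linarith
  have hmin : IsLocalMin w x₀ := by
    have hb : ball (0 : EuclideanSpace ℝ (Fin N)) R ∈ 𝓝 x₀ := isOpen_ball.mem_nhds (mem_ball.2 hx₀lt)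
    exact Filter.eventually_of_mem hb (fun y hy => hx₀min' y (ball_subset_closedBall hy))
  set b : Fin N → (EuclideanSpace ℝ (Fin N) →L[ℝ] ℝ) := fun i =>
    (((1-p) * (u x₀)^(1-p-1)) • fderiv ℝ (fun y => fderiv ℝ u y (EuclideanSpace.single i 1)) x₀
      + (fderiv ℝ u x₀ (EuclideanSpace.single i 1)) • ((1-p) • (((1-p-1) * (u x₀)^(1-p-1-1)) • fderiv ℝ u x₀)))
      + c • ((2:ℝ) • (EuclideanSpace.proj i : EuclideanSpace ℝ (Fin N) →L[ℝ] ℝ)) with hb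
  have hwd2 : ∀ i : Fin N, HasFDerivAt (fun y => w' y (EuclideanSpace.single i 1)) (b i) x₀ := by
    intro i
    have hA : HasFDerivAt (fun y => (1-p) * (u y)^(1-p-1))
        ((1-p) • (((1-p-1) * (u x₀)^(1-p-1-1)) • fderiv ℝ u x₀)) x₀ :=
      ((hdu x₀).rpow_const (Or.inl (hupos x₀).ne')).const_mul (1-p)
    have hB := hddu hreg i x₀
    have hAB := hA.mul hB
    have hC : HasFDerivAt (fun y : EuclideanSpace ℝ (Fin N) => c * (2 * (y i - (0:EuclideanSpace ℝ (Fin N)) i)))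
        (c • ((2:ℝ) • (EuclideanSpace.proj i : EuclideanSpace ℝ (Fin N) →L[ℝ] ℝ))) x₀ := by
      exact ((((EuclideanSpace.proj (𝕜 := ℝ) (ι := Fin N) i).hasFDerivAt (x := x₀)).sub_const
        ((0:EuclideanSpace ℝ (Fin N)) i)).const_mul (2:ℝ)).const_mul c
    have hfe : (fun y => w' y (EuclideanSpace.single i 1)) =
        (fun y => ((1-p) * (u y)^(1-p-1)) * (fderiv ℝ u y (EuclideanSpace.single i 1))
          + c * (2 * (y i - (0:EuclideanSpace ℝ (Fin N)) i))) := by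
      funext y
      simp [hwd, esq'_apply, ContinuousLinearMap.add_apply, ContinuousLinearMap.coe_smul',
        Pi.smul_apply, smul_eq_mul]
    rw [hfe]
    exact hAB.add hC
  have h0lap := lap_nonneg_of_min hw' hwd2 hmin
  have hterm : ∀ i : Fin N, b i (EuclideanSpace.single i 1)
      = ((1-p) * (u x₀)^(1-p-1)) * (fderiv ℝ (fun y => fderiv ℝ u y (EuclideanSpace.single i 1)) x₀ (EuclideanSpace.single i 1))
        + ((1-p) * ((1-p-1)*(u x₀)^(1-p-1-1))) * ((fderiv ℝ u x₀ (EuclideanSpace.single i 1)) * (fderiv ℝ u x₀ (EuclideanSpace.single i 1)))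
        + c * 2 := by
    intro i
    rw [hb]
    simp only [ContinuousLinearMap.add_apply, ContinuousLinearMap.coe_smul', Pi.smul_apply,
      smul_eq_mul]
    have hproj : (EuclideanSpace.proj i : EuclideanSpace ℝ (Fin N) →L[ℝ] ℝ)
        (EuclideanSpace.single i 1) = 1 := by
      simp [EuclideanSpace.single_apply]
    rw [hproj]
    ring
  have hlapval : lap w x₀ = ((1-p) * (u x₀)^(1-p-1)) * (lap u x₀)
      + ((1-p) * ((1-p-1) * (u x₀)^(1-p-1-1)))
        * (∑ i, (fderiv ℝ u x₀ (EuclideanSpace.single i 1)) * (fderiv ℝ u x₀ (EuclideanSpace.single i 1)))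
      + (N:ℝ) * (c * 2) := by
    rw [lap_eq hw' hwd2, Finset.sum_congr rfl (fun i _ => hterm i)]
    rw [Finset.sum_add_distrib, Finset.sum_add_distrib, ← Finset.mul_sum, ← Finset.mul_sum,
      Finset.sum_const, Finset.card_univ, Fintype.card_fin, nsmul_eq_mul]
    rfl
  have hlapu : lap u x₀ = -((u x₀) ^ p) := by linarith [heq x₀]
  have hS : 0 ≤ ∑ i, (fderiv ℝ u x₀ (EuclideanSpace.single i 1)) * (fderiv ℝ u x₀ (EuclideanSpace.single i 1)) :=
    Finset.sum_nonneg fun i _ => mul_self_nonneg _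
  have hpow : (u x₀) ^ (1 - p - 1) * (u x₀) ^ p = 1 := by
    rw [← Real.rpow_add (hupos x₀)]
    norm_num
  have hNc : (N:ℝ) * (c * 2) = (1 - p)/2 := by
    rw [hc]; field_simp; ring
  have hneg : (1-p) * ((1-p-1) * (u x₀)^(1-p-1-1)) ≤ 0 := by
    have hpp : 0 < (u x₀)^(1-p-1-1) := Real.rpow_pos_of_pos (hupos x₀) _
    have h1 : (1 - p - 1) * (u x₀)^(1-p-1-1) ≤ 0 := by nlinarith
    nlinarith [mul_nonneg (le_of_lt (by linarith : (0:ℝ) < 1 - p)) (neg_nonneg.2 h1)]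
  have hfirst : ((1-p) * (u x₀)^(1-p-1)) * (lap u x₀) = -(1-p) := by
    rw [hlapu, mul_neg, mul_assoc, hpow, mul_one]
  rw [hlapval, hfirst, hNc] at h0lap
  nlinarith [mul_nonpos_of_nonpos_of_nonneg hneg hS]


lemma esq'_apply' (a y v : EuclideanSpace ℝ (Fin N)) :
    esq' a y v = ∑ i, 2 * (y i - a i) * v i := by
  unfold esq'
  rw [ContinuousLinearMap.sum_apply]
  refine Finset.sum_congr rfl fun i _ => ?_
  simp [mul_assoc]

lemma esq'_apply_self (a y : EuclideanSpace ℝ (Fin N)) :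
    esq' a y (y - a) = 2 * esq a y := by
  rw [esq'_apply']
  unfold esq
  rw [Finset.mul_sum]
  refine Finset.sum_congr rfl fun i _ => ?_
  have : (y - a) i = y i - a i := rfl
  rw [this]; ring

lemma continuous_esq (a : EuclideanSpace ℝ (Fin N)) : Continuous (esq a) :=
  continuous_finset_sum _ fun i _ =>
    ((EuclideanSpace.proj i).continuous.sub continuous_const).mul
      ((EuclideanSpace.proj i).continuous.sub continuous_const)

lemma caseB (hNpos : 0 < N) {p : ℝ} (hp0 : 0 < p) (hp1 : p < 1)
    (hreg : ContDiff ℝ 2 u)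
    (hnonneg : ∀ x, 0 ≤ u x)
    (heq : ∀ x, -(lap u x) = (u x) ^ p)
    {a y₀ : EuclideanSpace ℝ (Fin N)} (ha : 0 < u a) (hy₀ : u y₀ = 0) : False := by
  have hdu : ∀ y, HasFDerivAt u (fderiv ℝ u y) y := fun y =>
    ((hreg.differentiable (by norm_num)) y).hasFDerivAt
  have hlapnonpos : ∀ z, lap u z ≤ 0 := by
    intro z
    have h1 := heq z
    have h2 : 0 ≤ (u z)^p := Real.rpow_nonneg (hnonneg z) p
    linarith
  set Z : Set (EuclideanSpace ℝ (Fin N)) := u ⁻¹' {0} with hZ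
  have hZclosed : IsClosed Z := isClosed_singleton.preimage hreg.continuous
  have hZne : Z.Nonempty := ⟨y₀, hy₀⟩
  set d : ℝ := Metric.infDist a Z with hd
  have haZ : a ∉ Z := by
    simp only [hZ, Set.mem_preimage, Set.mem_singleton_iff]
    exact ha.ne'
  have hdpos : 0 < d := (hZclosed.notMem_iff_infDist_pos hZne).1 haZ
  obtain ⟨y, hyZ, hyd⟩ := hZclosed.exists_infDist_eq_dist hZne a
  have huy : u y = 0 := hyZ
  have hyda : dist y a = d := by rw [dist_comm]; exact hyd.symm
  have hballpos : ∀ z, dist z a < d → 0 < u z := by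
    intro z hz
    rcases (hnonneg z).lt_or_eq with h | h
    · exact h
    · exfalso
      have hzZ : z ∈ Z := by
        simp only [hZ, Set.mem_preimage, Set.mem_singleton_iff]
        exact h.symm
      have h3 := Metric.infDist_le_dist_of_mem (x := a) hzZ
      rw [dist_comm] at h3
      linarith
  -- the inner sphere and its minimum
  have hsne : (Metric.sphere a (d/2)).Nonempty := by
    refine ⟨a + (d/2) • EuclideanSpace.single ⟨0, hNpos⟩ (1:ℝ), ?_⟩
    rw [Metric.mem_sphere, dist_eq_norm]
    have : a + (d/2) • EuclideanSpace.single ⟨0, hNpos⟩ (1:ℝ) - a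
        = (d/2) • EuclideanSpace.single ⟨0, hNpos⟩ (1:ℝ) := by abel
    rw [this, norm_smul, EuclideanSpace.norm_single]
    rw [Real.norm_eq_abs, abs_of_pos (by linarith : (0:ℝ) < d/2)]
    simp
  obtain ⟨xm, hxmS, hxmmin⟩ := (isCompact_sphere a (d/2)).exists_isMinOn hsne
    hreg.continuous.continuousOn
  have hxmmin' := isMinOn_iff.1 hxmmin
  set m : ℝ := u xm with hm
  have hmpos : 0 < m := by
    apply hballpos
    have := Metric.mem_sphere.1 hxmS
    rw [this]
    linarith
  set α : ℝ := (2*(N:ℝ)+1)/d^2 with hα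
  have hαpos : 0 < α := by positivity
  have hαd : α * d^2 = 2*(N:ℝ)+1 := by
    rw [hα]; field_simp
  set ε : ℝ := m * Real.exp (α * (d/2)^2) with hε
  have hεpos : 0 < ε := by positivity
  set κ : ℝ := ε * Real.exp (-α * d^2) with hκ
  have hκpos : 0 < κ := by positivity
  set F : EuclideanSpace ℝ (Fin N) → ℝ := fun z => Real.exp (-α * esq a z) with hF
  set w : EuclideanSpace ℝ (Fin N) → ℝ := fun z => u z - ε * F z with hw
  set w' : EuclideanSpace ℝ (Fin N) → (EuclideanSpace ℝ (Fin N) →L[ℝ] ℝ) := fun z =>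
    fderiv ℝ u z - ε • (F z • ((-α) • esq' a z)) with hwd
  have hFd : ∀ z, HasFDerivAt F (F z • ((-α) • esq' a z)) z := fun z =>
    ((hasFDerivAt_esq a z).const_mul (-α)).exp
  have hw' : ∀ z, HasFDerivAt w (w' z) z := fun z =>
    (hdu z).sub ((hFd z).const_mul ε)
  have hwc : Continuous w :=
    hreg.continuous.sub (continuous_const.mul ((continuous_const.mul (continuous_esq a)).rexp))
  set K : Set (EuclideanSpace ℝ (Fin N)) :=
    Metric.closedBall a d \ Metric.ball a (d/2) with hK
  have hyK : y ∈ K := by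
    constructor
    · rw [Metric.mem_closedBall, hyda]
    · rw [Metric.mem_ball, hyda]
      simp only [not_lt]
      linarith
  have hKcompact : IsCompact K := (isCompact_closedBall a d).diff Metric.isOpen_ball
  -- lower bound on the annulus
  have hlb : ∀ z ∈ K, -κ ≤ w z := by
    by_contra hcon
    push_neg at hcon
    obtain ⟨z₁, hz₁K, hz₁⟩ := hcon
    obtain ⟨z₀, hz₀K, hz₀min⟩ := hKcompact.exists_isMinOn ⟨y, hyK⟩ hwc.continuousOn
    have hz₀min' := isMinOn_iff.1 hz₀min
    have hz₀neg : w z₀ < -κ := lt_of_le_of_lt (hz₀min' z₁ hz₁K) hz₁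
    have h1 : dist z₀ a ≤ d := Metric.mem_closedBall.1 hz₀K.1
    have h2 : d/2 ≤ dist z₀ a := not_lt.1 (fun hh => hz₀K.2 (Metric.mem_ball.2 hh))
    have houter : dist z₀ a < d := by
      rcases h1.lt_or_eq with h | h
      · exact h
      · exfalso
        have hesq : esq a z₀ = d^2 := by rw [esq_eq_dist, h]
        have : w z₀ = u z₀ - ε * Real.exp (-α * d^2) := by
          show u z₀ - ε * F z₀ = _
          rw [hF]
          simp only [hesq]
        rw [this] at hz₀neg
        rw [hκ] at hz₀neg
        linarith [hnonneg z₀]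
    have hinner : d/2 < dist z₀ a := by
      rcases h2.lt_or_eq with h | h
      · exact h
      · exfalso
        have hum : m ≤ u z₀ := hxmmin' z₀ (Metric.mem_sphere.2 h.symm)
        have hesq : esq a z₀ = (d/2)^2 := by rw [esq_eq_dist, ← h]
        have hFm : ε * F z₀ = m := by
          rw [hF, hε]
          simp only [hesq]
          rw [mul_assoc, ← Real.exp_add]
          simp
        have : w z₀ = u z₀ - m := by
          show u z₀ - ε * F z₀ = u z₀ - m
          rw [hFm]
        rw [this] at hz₀neg
        linarith
    have hminz₀ : IsLocalMin w z₀ := by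
      have hO : IsOpen (Metric.ball a d \ Metric.closedBall a (d/2)) :=
        Metric.isOpen_ball.sdiff Metric.isClosed_closedBall
      have hz₀O : z₀ ∈ Metric.ball a d \ Metric.closedBall a (d/2) :=
        ⟨Metric.mem_ball.2 houter, fun hh => absurd (Metric.mem_closedBall.1 hh) (not_le.2 hinner)⟩
      have hOK : (Metric.ball a d \ Metric.closedBall a (d/2)) ⊆ K := fun z hz =>
        ⟨Metric.ball_subset_closedBall hz.1, fun hb => hz.2 (Metric.ball_subset_closedBall hb)⟩
      exact Filter.eventually_of_mem (hO.mem_nhds hz₀O) (fun z hz => hz₀min' z (hOK hz))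
    -- second derivative data at z₀
    set b : Fin N → (EuclideanSpace ℝ (Fin N) →L[ℝ] ℝ) := fun i =>
      fderiv ℝ (fun z => fderiv ℝ u z (EuclideanSpace.single i 1)) z₀
        - ε • (F z₀ • ((-α) • ((2:ℝ) • (EuclideanSpace.proj i : EuclideanSpace ℝ (Fin N) →L[ℝ] ℝ)))
          + ((-α) * (2 * (z₀ i - a i))) • (F z₀ • ((-α) • esq' a z₀))) with hb
    have hwd2 : ∀ i : Fin N, HasFDerivAt (fun z => w' z (EuclideanSpace.single i 1)) (b i) z₀ := by
      intro i
      have hGi : HasFDerivAt (fun z : EuclideanSpace ℝ (Fin N) => (-α) * (2 * (z i - a i)))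
          ((-α) • ((2:ℝ) • (EuclideanSpace.proj i : EuclideanSpace ℝ (Fin N) →L[ℝ] ℝ))) z₀ :=
        ((((EuclideanSpace.proj (𝕜 := ℝ) (ι := Fin N) i).hasFDerivAt (x := z₀)).sub_const
          (a i)).const_mul (2:ℝ)).const_mul (-α)
      have hprod := (hFd z₀).mul hGi
      have full := (hddu hreg i z₀).sub (hprod.const_mul ε)
      have hfe : (fun z => w' z (EuclideanSpace.single i 1)) =
          (fun z => fderiv ℝ u z (EuclideanSpace.single i 1)
            - ε * (F z * ((-α) * (2 * (z i - a i))))) := by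
        funext z
        simp only [hwd, ContinuousLinearMap.sub_apply, ContinuousLinearMap.coe_smul',
          Pi.smul_apply, smul_eq_mul, esq'_apply]
      rw [hfe]
      exact full
    have h0lap := lap_nonneg_of_min hw' hwd2 hminz₀
    have hterm : ∀ i : Fin N, b i (EuclideanSpace.single i 1)
        = fderiv ℝ (fun z => fderiv ℝ u z (EuclideanSpace.single i 1)) z₀ (EuclideanSpace.single i 1)
          + 2*α*(ε * F z₀)
          + (-(4*α^2*(ε * F z₀))) * ((z₀ i - a i) * (z₀ i - a i)) := by
      intro i
      rw [hb]
      simp only [ContinuousLinearMap.sub_apply, ContinuousLinearMap.add_apply,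
        ContinuousLinearMap.coe_smul', Pi.smul_apply, smul_eq_mul, esq'_apply]
      have hproj : (EuclideanSpace.proj i : EuclideanSpace ℝ (Fin N) →L[ℝ] ℝ)
          (EuclideanSpace.single i 1) = 1 := by
        simp [EuclideanSpace.single_apply]
      rw [hproj]
      ring
    have hlapval : lap w z₀ = lap u z₀ + (N:ℝ) * (2*α*(ε * F z₀))
        + (-(4*α^2*(ε * F z₀))) * esq a z₀ := by
      rw [lap_eq hw' hwd2, Finset.sum_congr rfl (fun i _ => hterm i)]
      rw [Finset.sum_add_distrib, Finset.sum_add_distrib, Finset.sum_const, Finset.card_univ,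
        Fintype.card_fin, ← Finset.mul_sum, nsmul_eq_mul]
      rfl
    have hFpos : 0 < F z₀ := Real.exp_pos _
    have hesq_gt : d^2/4 < esq a z₀ := by
      rw [esq_eq_dist]
      nlinarith [hinner, hdpos]
    have hkey : 2*α*(N:ℝ) + α ≤ 4*α^2 * esq a z₀ := by
      have h5 : α^2 * d^2 = α*(2*(N:ℝ)+1) := by
        have : α^2 * d^2 = α * (α * d^2) := by ring
        rw [this, hαd]
      nlinarith [mul_le_mul_of_nonneg_left hesq_gt.le (by positivity : (0:ℝ) ≤ 4*α^2)]
    have hεF : 0 < ε * F z₀ := mul_pos hεpos hFpos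
    have hlapneg : lap w z₀ < 0 := by
      rw [hlapval]
      nlinarith [hlapnonpos z₀, mul_pos hεF hαpos, mul_le_mul_of_nonneg_left hkey hεF.le]
    linarith
  -- the segment argument
  have hnormya : ‖y - a‖ = d := by rw [← dist_eq_norm, hyda]
  have hKmem : ∀ t : ℝ, t ∈ Icc (1/2 : ℝ) 1 → (a + t • (y - a)) ∈ K := by
    intro t ht
    have hdist : dist (a + t • (y - a)) a = t * d := by
      rw [dist_eq_norm]
      have h6 : a + t • (y - a) - a = t • (y - a) := by abel
      rw [h6, norm_smul, Real.norm_eq_abs, abs_of_nonneg (by linarith [ht.1]), hnormya]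
    constructor
    · rw [Metric.mem_closedBall, hdist]
      nlinarith [ht.2, hdpos]
    · rw [Metric.mem_ball, hdist]
      simp only [not_lt]
      nlinarith [ht.1, hdpos]
  set Φ : ℝ → ℝ := fun t => w (a + t • (y - a)) with hΦ
  have hline1 : a + (1:ℝ) • (y - a) = y := by
    rw [one_smul]; abel
  have hΦ1 : Φ 1 = -κ := by
    rw [hΦ]
    simp only [hline1]
    have hesq : esq a y = d^2 := by rw [esq_eq_dist, hyda]
    rw [hw, hF]
    simp only [hesq, huy, hκ]
    ring
  -- u has a global min at y, so fderiv u y = 0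
  have hminy : IsLocalMin u y := by
    apply Filter.Eventually.of_forall
    intro z
    rw [huy]
    exact hnonneg z
  have hfdy : fderiv ℝ u y = 0 := hminy.fderiv_eq_zero
  -- derivative of Φ at 1
  have hlined : ∀ t : ℝ, HasDerivAt (fun s : ℝ => a + s • (y - a)) (y - a) t := by
    intro t
    have h1 : HasDerivAt (fun s : ℝ => s • (y - a)) ((1:ℝ) • (y - a)) t :=
      (hasDerivAt_id t).smul_const (y - a)
    have h2 := h1.const_add a
    simpa using h2
  have hΦd : HasDerivAt Φ (w' y (y - a)) 1 := by
    have := (hw' y).comp_hasDerivAt_of_eq 1 (hlined 1) (by rw [hline1])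
    simpa [hΦ, Function.comp_def] using this
  have hderivval : w' y (y - a) = ε * α * (2 * esq a y) * F y := by
    rw [hwd]
    simp only [ContinuousLinearMap.sub_apply, ContinuousLinearMap.coe_smul', Pi.smul_apply,
      smul_eq_mul, hfdy, ContinuousLinearMap.zero_apply, esq'_apply_self]
    ring
  have hcpos : 0 < w' y (y - a) := by
    rw [hderivval]
    have hesq : esq a y = d^2 := by rw [esq_eq_dist, hyda]
    rw [hesq]
    have : 0 < F y := Real.exp_pos _
    positivity
  -- slope contradiction
  have hslope : Filter.Tendsto (slope Φ 1) (𝓝[≠] (1:ℝ)) (𝓝 (w' y (y - a))) :=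
    hasDerivAt_iff_tendsto_slope.1 hΦd
  have hslope' : Filter.Tendsto (slope Φ 1) (𝓝[<] (1:ℝ)) (𝓝 (w' y (y - a))) :=
    hslope.mono_left (nhdsWithin_mono _ (fun t ht => ne_of_lt ht))
  have hev1 : ∀ᶠ t in 𝓝[<] (1:ℝ), 0 < slope Φ 1 t :=
    hslope'.eventually_const_lt hcpos
  have hev2 : ∀ᶠ t in 𝓝[<] (1:ℝ), t ∈ Ioo (1/2 : ℝ) 1 :=
    Ioo_mem_nhdsLT_of_mem (by constructor <;> norm_num)
  obtain ⟨t, hts, htI⟩ := (hev1.and hev2).exists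
  have hΦt : -κ ≤ Φ t := hlb _ (hKmem t ⟨htI.1.le, htI.2.le⟩)
  have hslope_eq : slope Φ 1 t = (Φ t - Φ 1) / (t - 1) := slope_def_field Φ 1 t
  rw [hslope_eq] at hts
  rcases div_pos_iff.1 hts with ⟨h1, h2⟩ | ⟨h1, h2⟩
  · linarith [htI.2]
  · rw [hΦ1] at h1
    linarith

end Main

theorem stmt10 (N : ℕ) (p : ℝ) (hp0 : 0 < p) (hp1 : p < 1)
    (u : EuclideanSpace ℝ (Fin N) → ℝ)
    (hreg : ContDiff ℝ 2 u)
    (hnonneg : ∀ x, 0 ≤ u x)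
    (hbdd : BddAbove (Set.range u))
    (heq : ∀ x, -(lap u x) = (u x) ^ p) :
    ∀ x, u x = 0 := by
  rcases Nat.eq_zero_or_pos N with hN | hNpos
  · intro x
    have hl : lap u x = 0 := by
      subst hN
      simp [lap]
    have h1 := heq x
    rw [hl, neg_zero] at h1
    by_contra hux
    have hupos : 0 < u x := lt_of_le_of_ne (hnonneg x) (Ne.symm hux)
    have h2 : (0:ℝ) < u x ^ p := Real.rpow_pos_of_pos hupos p
    linarith
  · have hzero : ∃ y, u y = 0 := by
      by_contra hz
      push_neg at hz
      exact caseA hNpos hp0 hp1 hreg heq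
        (fun x => lt_of_le_of_ne (hnonneg x) (Ne.symm (hz x)))
    obtain ⟨y₀, hy₀⟩ := hzero
    intro x
    by_contra hx
    exact caseB hNpos hp0 hp1 hreg hnonneg heq
      (lt_of_le_of_ne (hnonneg x) (Ne.symm hx)) hy₀
end

section
/- Let $B_R\subset\mathbb{R}^N$ be a ball with first Dirichlet eigenvalue $\lambda_1(R)<1$, with positive first eigenfunction $\varphi_1$. Suppose $h\in C^2(\overline{B_R})$ satisfies $-\Delta h=h^p$ and $0<h\leq 1$ in $\overline{B_R}$, where $0<p<1$. Then one obtains a contradiction: $\int_{\partial B_R}h\,\partial_n\varphi_1\,dS=\int_{B_R}(h^{p-1}-\lambda_1(R))h\varphi_1\,dy$, where the left side is negative (since $h>0$ and $\partial_n\varphi_1<0$ on $\partial B_R$) while the right side is positive (since $h^{p-1}\geq 1>\lambda_1(R)$). Hence no such $h$ exists. -/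
open Filter Metric Topology

/-- 1-d second derivative test: at a local min, the second derivative is nonnegative. -/
lemma onedim_second_deriv_nonneg {g : ℝ → ℝ} {c : ℝ}
    (hg : ∀ᶠ s in 𝓝 (0:ℝ), DifferentiableAt ℝ g s)
    (hc : HasDerivAt (deriv g) c 0)
    (hmin : IsLocalMin g 0) : 0 ≤ c := by
  by_contra hneg
  push_neg at hneg
  have hd0 : deriv g 0 = 0 := hmin.deriv_eq_zero
  have hslope : Tendsto (slope (deriv g) 0) (𝓝[≠] (0:ℝ)) (𝓝 c) :=
    hasDerivAt_iff_tendsto_slope.mp hc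
  have hslope' : Tendsto (slope (deriv g) 0) (𝓝[>] (0:ℝ)) (𝓝 c) :=
    hslope.mono_left (nhdsWithin_mono _ (fun s hs => ne_of_gt hs))
  have hev : ∀ᶠ s in 𝓝[>] (0:ℝ), slope (deriv g) 0 s < 0 :=
    hslope'.eventually_lt_const hneg
  have hev2 : ∀ᶠ s in 𝓝[>] (0:ℝ), deriv g s < 0 := by
    filter_upwards [hev, self_mem_nhdsWithin] with s hs hs0
    have hsp : (0:ℝ) < s := hs0
    have h1 : deriv g s / s < 0 := by simpa [slope_def_field, hd0] using hs
    calc deriv g s = (deriv g s / s) * s := (div_mul_cancel₀ _ (ne_of_gt hsp)).symm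
    _ < 0 := mul_neg_of_neg_of_pos h1 hsp
  -- extract intervals
  obtain ⟨ε, hε0, hεsub⟩ := (nhdsGT_basis (0:ℝ)).eventually_iff.mp hev2
  obtain ⟨δ, hδ0, hδ⟩ := Metric.eventually_nhds_iff.mp (hg.and hmin)
  set r := min ε δ / 2 with hrdef
  have hr0 : 0 < r := by positivity
  have hrε : r < ε := by
    have : min ε δ ≤ ε := min_le_left _ _
    simp only [hrdef]; linarith
  have hrδ : r < δ := by
    have : min ε δ ≤ δ := min_le_right _ _
    simp only [hrdef]; linarith
  have hcontg : ContinuousOn g (Set.Icc 0 r) := by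
    intro s hs
    have : dist s 0 < δ := by
      rw [Real.dist_eq, sub_zero, abs_of_nonneg hs.1]
      exact lt_of_le_of_lt hs.2 hrδ
    exact ((hδ this).1).continuousAt.continuousWithinAt
  have hanti : StrictAntiOn g (Set.Icc 0 r) := by
    apply strictAntiOn_of_deriv_neg (convex_Icc _ _) hcontg
    intro s hs
    rw [interior_Icc] at hs
    exact hεsub ⟨hs.1, lt_trans hs.2 hrε⟩
  have h1 : g r < g 0 := hanti (Set.left_mem_Icc.mpr hr0.le) (Set.right_mem_Icc.mpr hr0.le) hr0
  have h2 : g 0 ≤ g r := by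
    have : dist r 0 < δ := by rw [Real.dist_eq, sub_zero, abs_of_pos hr0]; exact hrδ
    exact (hδ this).2
  linarith

lemma fderiv_apply_differentiableAt {E : Type*} [NormedAddCommGroup E] [NormedSpace ℝ E]
    {w : E → ℝ} {x₀ : E} (hw : ContDiffAt ℝ 2 w x₀) (e : E) :
    DifferentiableAt ℝ (fun y => fderiv ℝ w y e) x₀ := by
  have h1 : ContDiffAt ℝ 1 (fderiv ℝ w) x₀ := hw.fderiv_right (by norm_num)
  have h2 : DifferentiableAt ℝ (fderiv ℝ w) x₀ := h1.differentiableAt one_ne_zero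
  exact (ContinuousLinearMap.apply ℝ ℝ e).differentiableAt.comp x₀ h2

lemma second_dir_deriv_nonneg {E : Type*} [NormedAddCommGroup E] [NormedSpace ℝ E]
    {w : E → ℝ} {x₀ : E} (e : E)
    (hdiff : ∀ᶠ y in 𝓝 x₀, DifferentiableAt ℝ w y)
    (hF : DifferentiableAt ℝ (fun y => fderiv ℝ w y e) x₀)
    (hmin : IsLocalMin w x₀) :
    0 ≤ fderiv ℝ (fun y => fderiv ℝ w y e) x₀ e := by
  set ℓ : ℝ → E := fun s => x₀ + s • e with hℓdef
  have hℓ0 : ℓ 0 = x₀ := by simp [hℓdef]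
  have hℓd : ∀ s : ℝ, HasDerivAt ℓ e s := by
    intro s
    have h1 : HasDerivAt (fun s : ℝ => s • e) ((1:ℝ) • e) s :=
      (hasDerivAt_id s).smul_const e
    simpa only [one_smul] using h1.const_add x₀
  have hℓcont : Tendsto ℓ (𝓝 0) (𝓝 x₀) := by
    rw [← hℓ0]; exact ((hℓd 0).continuousAt).tendsto
  set g : ℝ → ℝ := fun s => w (ℓ s) with hgdef
  have hev : ∀ᶠ s in 𝓝 (0:ℝ), HasDerivAt g (fderiv ℝ w (ℓ s) e) s := by
    filter_upwards [hℓcont.eventually hdiff] with s hs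
    exact hs.hasFDerivAt.comp_hasDerivAt s (hℓd s)
  have hgdiff : ∀ᶠ s in 𝓝 (0:ℝ), DifferentiableAt ℝ g s :=
    hev.mono fun s hs => hs.differentiableAt
  have hderiveq : (fun s => fderiv ℝ w (ℓ s) e) =ᶠ[𝓝 (0:ℝ)] deriv g :=
    hev.mono fun s hs => hs.deriv.symm
  have hc0 : HasDerivAt (fun s => fderiv ℝ w (ℓ s) e)
      (fderiv ℝ (fun y => fderiv ℝ w y e) x₀ e) 0 := by
    have h1 : HasFDerivAt (fun y => fderiv ℝ w y e)
        (fderiv ℝ (fun y => fderiv ℝ w y e) x₀) (ℓ 0) := hℓ0 ▸ hF.hasFDerivAt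
    exact h1.comp_hasDerivAt 0 (hℓd 0)
  have hc : HasDerivAt (deriv g) (fderiv ℝ (fun y => fderiv ℝ w y e) x₀ e) 0 :=
    hc0.congr_of_eventuallyEq hderiveq.symm
  have hming : IsLocalMin g 0 := by
    have := hℓcont.eventually hmin
    simpa [IsLocalMin, IsMinFilter, hgdef, hℓ0] using this
  exact onedim_second_deriv_nonneg hgdiff hc hming



open Real

/-- No solution `0 < h ≤ 1` of `-Δh = h^p` (`0 < p < 1`) can exist on a closed ball whose
first Dirichlet eigenvalue `lam₁ < 1`, where `φ₁ > 0` is the first eigenfunction with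
negative outward normal derivative on the boundary sphere. -/
theorem stmt12 (N : ℕ) (p R lam₁ : ℝ) (hp0 : 0 < p) (hp1 : p < 1) (hR : 0 < R)
    (y₀ : EuclideanSpace ℝ (Fin N))
    (φ₁ : EuclideanSpace ℝ (Fin N) → ℝ)
    (hφreg : ContDiffOn ℝ 2 φ₁ (Metric.closedBall y₀ R))
    (hφpos : ∀ x ∈ Metric.ball y₀ R, 0 < φ₁ x)
    (hφbc : ∀ x ∈ Metric.sphere y₀ R, φ₁ x = 0)
    (hφeig : ∀ x ∈ Metric.ball y₀ R, -(lap φ₁ x) = lam₁ * φ₁ x)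
    (hlam : lam₁ < 1)
    (hφn : ∀ x ∈ Metric.sphere y₀ R, fderiv ℝ φ₁ x (x - y₀) < 0)
    (h : EuclideanSpace ℝ (Fin N) → ℝ)
    (hhreg : ContDiffOn ℝ 2 h (Metric.closedBall y₀ R))
    (hhpos : ∀ x ∈ Metric.closedBall y₀ R, 0 < h x)
    (hhle : ∀ x ∈ Metric.closedBall y₀ R, h x ≤ 1)
    (hheq : ∀ x ∈ Metric.closedBall y₀ R, -(lap h x) = (h x) ^ p) :
    False := by
  set K := Metric.closedBall y₀ R with hKdef
  have hKcompact : IsCompact K := isCompact_closedBall _ _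
  have hy₀ball : y₀ ∈ Metric.ball y₀ R := Metric.mem_ball_self hR
  have hy₀K : y₀ ∈ K := Metric.mem_closedBall_self hR.le
  have hKne : K.Nonempty := ⟨y₀, hy₀K⟩
  have hballK : Metric.ball y₀ R ⊆ K := Metric.ball_subset_closedBall
  -- maximize φ₁ / h over K
  have hqcont : ContinuousOn (fun x => φ₁ x / h x) K :=
    (hφreg.continuousOn).div (hhreg.continuousOn) (fun x hx => (hhpos x hx).ne')
  obtain ⟨x₀, hx₀K, hmax⟩ := hKcompact.exists_isMaxOn hKne hqcont
  set M := φ₁ x₀ / h x₀ with hMdef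
  have hMpos : 0 < M :=
    lt_of_lt_of_le (div_pos (hφpos y₀ hy₀ball) (hhpos y₀ hy₀K)) (hmax hy₀K)
  have hx₀ball : x₀ ∈ Metric.ball y₀ R := by
    rcases lt_or_eq_of_le (Metric.mem_closedBall.mp hx₀K) with hlt | heq
    · exact Metric.mem_ball.mpr hlt
    · exfalso
      have : φ₁ x₀ = 0 := hφbc x₀ (Metric.mem_sphere.mpr heq)
      rw [hMdef, this, zero_div] at hMpos
      exact lt_irrefl 0 hMpos
  have hKnhds : K ∈ 𝓝 x₀ := mem_of_superset (Metric.isOpen_ball.mem_nhds hx₀ball) hballK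
  have hballnhds : ∀ y ∈ Metric.ball y₀ R, K ∈ 𝓝 y := fun y hy =>
    mem_of_superset (Metric.isOpen_ball.mem_nhds hy) hballK
  have hhCA : ∀ y ∈ Metric.ball y₀ R, ContDiffAt ℝ 2 h y := fun y hy =>
    hhreg.contDiffAt (hballnhds y hy)
  have hφCA : ∀ y ∈ Metric.ball y₀ R, ContDiffAt ℝ 2 φ₁ y := fun y hy =>
    hφreg.contDiffAt (hballnhds y hy)
  -- key inequalities
  have hub : ∀ x ∈ K, φ₁ x ≤ M * h x := fun x hx =>
    (div_le_iff₀ (hhpos x hx)).mp (hmax hx)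
  have htouch : φ₁ x₀ = M * h x₀ :=
    (div_mul_cancel₀ _ (hhpos x₀ hx₀K).ne').symm
  -- w := M h - φ₁ has an interior local min at x₀ with w x₀ = 0
  set w : EuclideanSpace ℝ (Fin N) → ℝ := fun x => M * h x - φ₁ x with hwdef
  have hw0 : w x₀ = 0 := by rw [hwdef]; simp [← htouch]
  have hmin : IsLocalMin w x₀ := by
    filter_upwards [hKnhds] with x hx
    rw [hw0]
    have := hub x hx
    simp only [hwdef]; linarith
  have hwdiff : ∀ᶠ y in 𝓝 x₀, DifferentiableAt ℝ w y := by
    filter_upwards [Metric.isOpen_ball.mem_nhds hx₀ball] with y hy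
    exact (((hhCA y hy).differentiableAt two_ne_zero).const_mul M).sub
      ((hφCA y hy).differentiableAt two_ne_zero)
  -- per-direction analysis
  have key : ∀ i : Fin N,
      0 ≤ M * fderiv ℝ (fun y => fderiv ℝ h y (EuclideanSpace.single i 1)) x₀
            (EuclideanSpace.single i 1)
          - fderiv ℝ (fun y => fderiv ℝ φ₁ y (EuclideanSpace.single i 1)) x₀
            (EuclideanSpace.single i 1) := by
    intro i
    set e := (EuclideanSpace.single i 1 : EuclideanSpace ℝ (Fin N)) with hedef
    have hFh : DifferentiableAt ℝ (fun y => fderiv ℝ h y e) x₀ :=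
      fderiv_apply_differentiableAt (hhCA x₀ hx₀ball) e
    have hFφ : DifferentiableAt ℝ (fun y => fderiv ℝ φ₁ y e) x₀ :=
      fderiv_apply_differentiableAt (hφCA x₀ hx₀ball) e
    have hFweq : (fun y => fderiv ℝ w y e)
        =ᶠ[𝓝 x₀] (fun y => M * fderiv ℝ h y e - fderiv ℝ φ₁ y e) := by
      filter_upwards [Metric.isOpen_ball.mem_nhds hx₀ball] with y hy
      have dh : DifferentiableAt ℝ h y := (hhCA y hy).differentiableAt two_ne_zero
      have dφ : DifferentiableAt ℝ φ₁ y := (hφCA y hy).differentiableAt two_ne_zero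
      have : fderiv ℝ w y = M • fderiv ℝ h y - fderiv ℝ φ₁ y := by
        rw [hwdef]
        rw [fderiv_fun_sub (dh.const_mul M) dφ, fderiv_const_mul dh M]
      rw [this]
      simp [ContinuousLinearMap.sub_apply, ContinuousLinearMap.smul_apply, smul_eq_mul]
    have hcomb : DifferentiableAt ℝ (fun y => M * fderiv ℝ h y e - fderiv ℝ φ₁ y e) x₀ :=
      (hFh.const_mul M).sub hFφ
    have hFw : DifferentiableAt ℝ (fun y => fderiv ℝ w y e) x₀ :=
      hcomb.congr_of_eventuallyEq hFweq
    have hval : fderiv ℝ (fun y => fderiv ℝ w y e) x₀ e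
        = M * fderiv ℝ (fun y => fderiv ℝ h y e) x₀ e
          - fderiv ℝ (fun y => fderiv ℝ φ₁ y e) x₀ e := by
      rw [hFweq.fderiv_eq]
      rw [fderiv_fun_sub (hFh.const_mul M) hFφ, fderiv_const_mul hFh M]
      simp [ContinuousLinearMap.sub_apply, ContinuousLinearMap.smul_apply, smul_eq_mul]
    have := second_dir_deriv_nonneg e hwdiff hFw hmin
    rw [hval] at this
    exact this
  -- sum over directions
  have hlapw : 0 ≤ M * lap h x₀ - lap φ₁ x₀ := by
    have : 0 ≤ ∑ i : Fin N,
        (M * fderiv ℝ (fun y => fderiv ℝ h y (EuclideanSpace.single i 1)) x₀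
            (EuclideanSpace.single i 1)
          - fderiv ℝ (fun y => fderiv ℝ φ₁ y (EuclideanSpace.single i 1)) x₀
            (EuclideanSpace.single i 1)) :=
      Finset.sum_nonneg fun i _ => key i
    simpa [lap, Finset.sum_sub_distrib, Finset.mul_sum] using this
  -- conclude
  have hlaph : lap h x₀ = -((h x₀) ^ p) := by
    have := hheq x₀ hx₀K; linarith
  have hlapφ : lap φ₁ x₀ = -(lam₁ * φ₁ x₀) := by
    have := hφeig x₀ hx₀ball; linarith
  rw [hlaph, hlapφ, htouch] at hlapw
  have hhx : 0 < h x₀ := hhpos x₀ hx₀K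
  have hple : h x₀ ^ p ≤ lam₁ * h x₀ := by
    have h2 : M * (h x₀ ^ p) ≤ M * (lam₁ * h x₀) := by ring_nf at hlapw ⊢; linarith
    exact le_of_mul_le_mul_left h2 hMpos
  have hge : h x₀ ≤ h x₀ ^ p := by
    have := Real.rpow_le_rpow_of_exponent_ge hhx (hhle x₀ hx₀K) hp1.le
    simpa [Real.rpow_one] using this
  nlinarith [hhx]
end
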